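/- For integers b, d, f ≥ 1, the expression (t^{L} − 1)²(t − 1) / ((t^{L/b} − 1)(t^{L/d} − 1)(t^{L/f} − 1)), with L = lcm(b,d,f), is a polynomial in t (i.e. the product of the three denominators divides (t^L − 1)²(t − 1) in ℚ[t]). -/

import Mathlib

open Polynomial

lemma count_divisors_aux (k n : ℕ) :
    Multiset.count k n.divisors.val = if k ∣ n ∧ n ≠ 0 then 1 else 0 := by
  split
  · exact Multiset.count_eq_one_of_mem n.divisors.nodup (Nat.mem_divisors.mpr ‹_›)
  · exact Multiset.count_eq_zero_of_notMem (fun h => ‹¬_› (Nat.mem_divisors.mp h))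

lemma pow_sub_one_eq_aux (n : ℕ) (hn : 0 < n) :
    (X ^ n - 1 : Polynomial ℚ) = (n.divisors.val.map (fun i => cyclotomic i ℚ)).prod := by
  rw [← prod_cyclotomic_eq_X_pow_sub_one hn ℚ]; rfl

theorem denominator_dvd_of_lcm (b d f : ℕ) (hb : 1 ≤ b) (hd : 1 ≤ d) (hf : 1 ≤ f) :
    ((X ^ (Nat.lcm (Nat.lcm b d) f / b) - 1) * (X ^ (Nat.lcm (Nat.lcm b d) f / d) - 1) *
        (X ^ (Nat.lcm (Nat.lcm b d) f / f) - 1) : Polynomial ℚ) ∣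
      (X ^ (Nat.lcm (Nat.lcm b d) f) - 1) ^ 2 * (X - 1) := by
  set L := Nat.lcm (Nat.lcm b d) f with hLdef
  have hbL : b ∣ L := (Nat.dvd_lcm_left b d).trans (Nat.dvd_lcm_left _ f)
  have hdL : d ∣ L := (Nat.dvd_lcm_right b d).trans (Nat.dvd_lcm_left _ f)
  have hfL : f ∣ L := Nat.dvd_lcm_right _ f
  have hLpos : 0 < L := Nat.pos_of_ne_zero (Nat.lcm_ne_zero (Nat.lcm_ne_zero (by omega) (by omega)) (by omega))
  have hA : 0 < L / b := Nat.div_pos (Nat.le_of_dvd hLpos hbL) hb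
  have hB : 0 < L / d := Nat.div_pos (Nat.le_of_dvd hLpos hdL) hd
  have hC : 0 < L / f := Nat.div_pos (Nat.le_of_dvd hLpos hfL) hf
  have hX1 : (X - 1 : Polynomial ℚ) = ((1 : ℕ).divisors.val.map (fun i => cyclotomic i ℚ)).prod := by
    have := pow_sub_one_eq_aux 1 one_pos
    simpa using this
  rw [pow_sub_one_eq_aux _ hA, pow_sub_one_eq_aux _ hB, pow_sub_one_eq_aux _ hC,
    pow_sub_one_eq_aux _ hLpos, hX1, sq, ← Multiset.prod_add, ← Multiset.prod_add,
    ← Multiset.prod_add, ← Multiset.prod_add, ← Multiset.map_add, ← Multiset.map_add,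
    ← Multiset.map_add, ← Multiset.map_add]
  apply Multiset.prod_dvd_prod_of_le
  apply Multiset.map_le_map
  rw [Multiset.le_iff_count]
  intro k
  -- key: if k divides all three of L/b, L/d, L/f then k = 1
  have key : k ∣ L / b → k ∣ L / d → k ∣ L / f → k = 1 := by
    intro h1 h2 h3
    have hb' : b * k ∣ L := (Nat.dvd_div_iff_mul_dvd hbL).mp h1
    have hd' : d * k ∣ L := (Nat.dvd_div_iff_mul_dvd hdL).mp h2
    have hf' : f * k ∣ L := (Nat.dvd_div_iff_mul_dvd hfL).mp h3
    have hkL : k ∣ L := dvd_trans ⟨b, mul_comm b k⟩ hb'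
    have hbk : b ∣ L / k := (Nat.dvd_div_iff_mul_dvd hkL).mpr (by rwa [mul_comm])
    have hdk : d ∣ L / k := (Nat.dvd_div_iff_mul_dvd hkL).mpr (by rwa [mul_comm])
    have hfk : f ∣ L / k := (Nat.dvd_div_iff_mul_dvd hkL).mpr (by rwa [mul_comm])
    have hLk : L ∣ L / k := Nat.lcm_dvd (Nat.lcm_dvd hbk hdk) hfk
    have := Nat.le_of_dvd (Nat.div_pos (Nat.le_of_dvd hLpos hkL)
      (Nat.pos_of_dvd_of_pos hkL hLpos)) hLk
    have hle := Nat.div_le_self L k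
    have : L / k = L := le_antisymm hle this
    rcases (Nat.div_eq_self.mp this) with h | h
    · omega
    · exact h
  have hAL : k ∣ L / b → k ∣ L := fun h => h.trans (Nat.div_dvd_of_dvd hbL)
  have hBL : k ∣ L / d → k ∣ L := fun h => h.trans (Nat.div_dvd_of_dvd hdL)
  have hCL : k ∣ L / f → k ∣ L := fun h => h.trans (Nat.div_dvd_of_dvd hfL)
  simp only [Multiset.count_add, count_divisors_aux]
  by_cases h1 : k ∣ L / b <;> by_cases h2 : k ∣ L / d <;> by_cases h3 : k ∣ L / f <;>
    (try simp_all [hLpos.ne', hA.ne', hB.ne', hC.ne']) <;> split_ifs <;> omega
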